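/- Let J be an n_L×N real matrix and let α, β, τ_u, τ_Q be strictly positive real numbers, and set Q* := (α/2) · Jᵀ (JJᵀ + α β τ_u · I)⁻¹. Then every differentiable matrix-valued function Q : ℝ → ℝ^{N×n_L} satisfying the linear matrix differential equation τ_Q Q′(t) = −(1/(τ_u α)) · Q(t) (JJᵀ) + (1/(2 τ_u)) · Jᵀ − β · Q(t) for all t converges to Q* as t → ∞, for every initial condition. (Theorem 3, convergence part: the first-moment dynamics of the feedback weights under the noisy anti-Hebbian plasticity rule are globally convergent to the damped pseudoinverse configuration.) -/

import Mathlib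

open Matrix Filter

attribute [local instance] Matrix.normedAddCommGroup Matrix.normedSpace

/-- Theorem 3, convergence part: every solution of the linear first-moment
feedback weight dynamics
`τ_Q Q' = −(1/(τ_u α)) Q JJᵀ + (1/(2τ_u)) Jᵀ − β Q`
converges, for every initial condition, to the damped pseudoinverse
configuration `Q* = (α/2) Jᵀ (JJᵀ + αβτ_u I)⁻¹`. -/
theorem feedback_weights_convergence {nL N : ℕ}
    (J : Matrix (Fin nL) (Fin N) ℝ)
    (α β τu τQ : ℝ) (hα : 0 < α) (hβ : 0 < β) (hτu : 0 < τu) (hτQ : 0 < τQ) :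
    ∀ Q : ℝ → Matrix (Fin N) (Fin nL) ℝ, Differentiable ℝ Q →
      (∀ t, τQ • deriv Q t =
          -(1 / (τu * α)) • (Q t * (J * Jᵀ)) + (1 / (2 * τu)) • Jᵀ - β • Q t) →
      Tendsto Q atTop
        (nhds ((α / 2) • (Jᵀ * (J * Jᵀ + (α * β * τu) • 1)⁻¹))) := by
  intro Q hQdiff hQode
  set M : Matrix (Fin nL) (Fin nL) ℝ := J * Jᵀ + (α * β * τu) • 1 with hM
  set Qs : Matrix (Fin N) (Fin nL) ℝ := (α / 2) • (Jᵀ * M⁻¹) with hQs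
  -- M is positive definite, hence invertible
  have hMpd : M.PosDef := by
    have hSpsd : (J * Jᵀ).PosSemidef := by
      have := Matrix.posSemidef_self_mul_conjTranspose J
      rwa [Matrix.conjTranspose_eq_transpose_of_trivial] at this
    refine Matrix.PosDef.posSemidef_add hSpsd ?_
    rw [Matrix.smul_one_eq_diagonal]
    exact Matrix.PosDef.diagonal fun i => by positivity
  have hinv : M⁻¹ * M = 1 :=
    Matrix.nonsing_inv_mul M ((Matrix.isUnit_iff_isUnit_det M).mp hMpd.isUnit)
  -- equilibrium identity
  have heq : (1 / (2 * τu)) • Jᵀ = (1 / (τu * α)) • (Qs * (J * Jᵀ)) + β • Qs := by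
    have h1 : M⁻¹ * (J * Jᵀ) = 1 - (α * β * τu) • M⁻¹ := by
      have hS : J * Jᵀ = M - (α * β * τu) • 1 := by rw [hM]; abel
      rw [hS, Matrix.mul_sub, hinv, Matrix.mul_smul, Matrix.mul_one]
    have h2 : Qs * (J * Jᵀ) = (α / 2) • Jᵀ - (α / 2 * (α * β * τu)) • (Jᵀ * M⁻¹) := by
      rw [hQs, Matrix.smul_mul, Matrix.mul_assoc, h1, Matrix.mul_sub, Matrix.mul_smul,
        Matrix.mul_one, smul_sub, smul_smul]
    rw [h2, hQs]
    match_scalars <;> field_simp <;> ring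
  -- the error E and its dynamics
  set E : ℝ → Matrix (Fin N) (Fin nL) ℝ := fun t => Q t - Qs with hE
  have hEdiff : Differentiable ℝ E := hQdiff.sub_const Qs
  have hEode : ∀ t, τQ • deriv E t = -(1 / (τu * α)) • (E t * (J * Jᵀ)) - β • E t := by
    intro t
    have hdE : deriv E t = deriv Q t := by
      simp only [hE]; exact deriv_sub_const Qs
    rw [hdE, hQode t, hE]
    simp only [Matrix.sub_mul, smul_sub]
    rw [heq]
    module
  -- entrywise derivative
  have hentry : ∀ t i j, HasDerivAt (fun s => E s i j) (deriv E t i j) t := by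
    intro t i j
    exact hasDerivAt_pi.mp (hasDerivAt_pi.mp (hEdiff t).hasDerivAt i) j
  have hEij : ∀ t i j, deriv E t i j =
      τQ⁻¹ * (-(1 / (τu * α)) * (E t * (J * Jᵀ)) i j - β * E t i j) := by
    intro t i j
    have h := congrFun (congrFun (hEode t) i) j
    simp only [Matrix.smul_apply, Matrix.sub_apply, smul_eq_mul, Matrix.neg_apply] at h
    field_simp at h ⊢
    linarith
  -- Lyapunov function
  set f : ℝ → ℝ := fun t => ∑ i, ∑ j, E t i j * E t i j with hf
  have hf' : ∀ t, HasDerivAt f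
      (∑ i, ∑ j, (deriv E t i j * E t i j + E t i j * deriv E t i j)) t := by
    intro t
    exact HasDerivAt.fun_sum fun i _ => HasDerivAt.fun_sum fun j _ =>
      (hentry t i j).fun_mul (hentry t i j)
  have hfdiff : Differentiable ℝ f := fun t => (hf' t).differentiableAt
  have hfnonneg : ∀ t, 0 ≤ f t := fun t =>
    Finset.sum_nonneg fun i _ => Finset.sum_nonneg fun j _ => mul_self_nonneg _
  -- key positivity
  have key : ∀ (B : Matrix (Fin N) (Fin nL) ℝ),
      ∑ i, ∑ j, B i j * (B * (J * Jᵀ)) i j = ∑ i, ∑ k, (B * J) i k * (B * J) i k := by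
    intro B
    refine Finset.sum_congr rfl fun i _ => ?_
    calc ∑ j, B i j * (B * (J * Jᵀ)) i j
        = ∑ j, ∑ k, B i j * ((B * J) i k * J j k) := by
          simp only [← Matrix.mul_assoc, Matrix.mul_apply (M := B * J), Matrix.transpose_apply,
            Finset.mul_sum]
      _ = ∑ k, ∑ j, B i j * ((B * J) i k * J j k) := Finset.sum_comm
      _ = ∑ k, (B * J) i k * ∑ j, B i j * J j k := by
          refine Finset.sum_congr rfl fun k _ => ?_
          rw [Finset.mul_sum]; exact Finset.sum_congr rfl fun j _ => by ring
      _ = ∑ k, (B * J) i k * (B * J) i k := by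
          refine Finset.sum_congr rfl fun k _ => ?_
          rw [Matrix.mul_apply]
  -- derivative bound
  set k : ℝ := 2 * β / τQ with hk
  have hkpos : 0 < k := by positivity
  have hderivf : ∀ t, deriv f t ≤ -k * f t := by
    intro t
    rw [(hf' t).deriv]
    have hsum : ∑ i, ∑ j, (deriv E t i j * E t i j + E t i j * deriv E t i j)
        = (-(2 * τQ⁻¹ * (1 / (τu * α)))) * (∑ i, ∑ j, E t i j * (E t * (J * Jᵀ)) i j)
          + (-(2 * β * τQ⁻¹)) * f t := by
      rw [hf, Finset.mul_sum, Finset.mul_sum, ← Finset.sum_add_distrib]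
      refine Finset.sum_congr rfl fun i _ => ?_
      rw [Finset.mul_sum, Finset.mul_sum, ← Finset.sum_add_distrib]
      refine Finset.sum_congr rfl fun j _ => ?_
      rw [hEij t i j]
      ring
    rw [hsum, key]
    have h1 : 0 ≤ ∑ i, ∑ kk, (E t * J) i kk * (E t * J) i kk :=
      Finset.sum_nonneg fun i _ => Finset.sum_nonneg fun kk _ => mul_self_nonneg _
    have h2 : 0 ≤ 2 * τQ⁻¹ * (1 / (τu * α)) := by positivity
    have h3 : -(2 * β * τQ⁻¹) * f t = -k * f t := by
      rw [hk]; field_simp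
    nlinarith
  -- Gronwall-type decay
  set g : ℝ → ℝ := fun t => f t * Real.exp (k * t) with hg
  have hgd : ∀ t, HasDerivAt g (deriv f t * Real.exp (k * t) + f t * (Real.exp (k * t) * k)) t := by
    intro t
    have h := ((hfdiff t).hasDerivAt).fun_mul (((hasDerivAt_id t).const_mul k).exp)
    simpa using h
  have hganti : Antitone g := by
    refine antitone_of_deriv_nonpos (fun t => (hgd t).differentiableAt) fun t => ?_
    rw [(hgd t).deriv]
    have h1 := hderivf t
    have h2 := Real.exp_pos (k * t)
    nlinarith
  have hbound : ∀ t : ℝ, 0 ≤ t → f t ≤ f 0 * Real.exp (-(k * t)) := by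
    intro t ht
    rw [Real.exp_neg, ← div_eq_mul_inv, le_div_iff₀ (Real.exp_pos _)]
    calc f t * Real.exp (k * t) = g t := rfl
      _ ≤ g 0 := hganti ht
      _ = f 0 := by simp [hg]
  have hftends : Tendsto f atTop (nhds 0) := by
    have hexp : Tendsto (fun t : ℝ => f 0 * Real.exp (-(k * t))) atTop (nhds 0) := by
      have h1 : Tendsto (fun t : ℝ => k * t) atTop atTop :=
        Tendsto.const_mul_atTop hkpos tendsto_id
      have h2 : Tendsto (fun t : ℝ => Real.exp (-(k * t))) atTop (nhds 0) := by
        have := Real.tendsto_exp_atBot.comp (tendsto_neg_atBot_iff.mpr h1)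
        exact this
      have := h2.const_mul (f 0)
      simpa using this
    refine squeeze_zero' (Eventually.of_forall hfnonneg) ?_ hexp
    filter_upwards [eventually_ge_atTop (0:ℝ)] with t ht using hbound t ht
  -- convert to matrix convergence
  have hnorm : ∀ t, ‖E t‖ ≤ Real.sqrt (f t) := by
    intro t
    rw [Matrix.norm_le_iff (Real.sqrt_nonneg _)]
    intro i j
    rw [Real.norm_eq_abs]
    refine Real.abs_le_sqrt ?_
    calc E t i j ^ 2 = E t i j * E t i j := by ring
      _ ≤ ∑ j', E t i j' * E t i j' :=
          Finset.single_le_sum (f := fun j' => E t i j' * E t i j')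
            (fun j' _ => mul_self_nonneg _) (Finset.mem_univ j)
      _ ≤ f t := by
          rw [hf]
          exact Finset.single_le_sum (f := fun i' => ∑ j', E t i' j' * E t i' j')
            (fun i' _ => Finset.sum_nonneg fun j' _ => mul_self_nonneg _) (Finset.mem_univ i)
  have hsqrt : Tendsto (fun t => Real.sqrt (f t)) atTop (nhds 0) := by
    have := (Real.continuous_sqrt.tendsto 0).comp hftends
    simpa [Function.comp_def] using this
  have hEtends : Tendsto (fun t => ‖E t‖) atTop (nhds 0) :=
    squeeze_zero (fun t => norm_nonneg _) hnorm hsqrt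
  have := tendsto_iff_norm_sub_tendsto_zero.mpr hEtends
  exact this
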